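/- The identity operator from ℓ₁ⁿ to ℓ_∞ⁿ has 1-summing norm equal to 1: π₁(id : ℓ₁ⁿ → ℓ_∞ⁿ) = 1. -/

import Mathlib

/-- The complex "sign" of a boolean: `1` for `true`, `-1` for `false`. -/
noncomputable def sgnC (b : Bool) : ℂ := if b then 1 else -1

lemma sgnC_norm (b : Bool) : ‖sgnC b‖ = 1 := by cases b <;> simp [sgnC]

/-- Every complex number can be rotated to its norm by a unimodular scalar. -/
lemma phase_exists (z : ℂ) : ∃ t : ℂ, ‖t‖ = 1 ∧ t * z = (‖z‖ : ℂ) := by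
  by_cases hz : z = 0
  · exact ⟨1, by simp [hz]⟩
  · refine ⟨(starRingEnd ℂ) z / ‖z‖, ?_, ?_⟩
    · simp [norm_div, hz]
    · have hnz : ((‖z‖ : ℝ) : ℂ) ≠ 0 := by
        simpa using (norm_ne_zero_iff (E := ℂ)).mpr hz
      field_simp
      rw [Complex.conj_mul', pow_two]

/-- Under the weak-`ℓ¹` constraint, each fixed sign pattern gives total mass at most `1`. -/
lemma pointwise_sum_le {n l : ℕ} (x : Fin l → Fin n → ℂ)
    (h : ∀ t : Fin l → ℂ, (∀ k, ‖t k‖ = 1) →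
      ∑ j : Fin n, ‖∑ k : Fin l, t k * x k j‖ ≤ 1)
    (ε : Fin n → Bool) :
    ∑ k : Fin l, ‖∑ j : Fin n, sgnC (ε j) * x k j‖ ≤ 1 := by
  set z : Fin l → ℂ := fun k => ∑ j, sgnC (ε j) * x k j with hz
  choose t ht1 ht2 using fun k => phase_exists (z k)
  have key : ∑ k, t k * z k = ∑ j, sgnC (ε j) * ∑ k, t k * x k j := by
    simp_rw [hz, Finset.mul_sum]
    rw [Finset.sum_comm]
    exact Finset.sum_congr rfl fun j _ => Finset.sum_congr rfl fun k _ => by ring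
  have h1 : ∑ k, ‖z k‖ = (∑ k, t k * z k).re := by
    simp_rw [ht2]
    simp [Complex.re_sum]
  rw [h1, key]
  calc (∑ j, sgnC (ε j) * ∑ k, t k * x k j).re
      ≤ ‖∑ j, sgnC (ε j) * ∑ k, t k * x k j‖ := Complex.re_le_norm _
    _ ≤ ∑ j, ‖sgnC (ε j) * ∑ k, t k * x k j‖ := norm_sum_le _ _
    _ = ∑ j, ‖∑ k, t k * x k j‖ := by simp only [norm_mul, sgnC_norm, one_mul]
    _ ≤ 1 := h t ht1

/-- Averaging over all sign patterns dominates any single coordinate. -/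
lemma avg_signs {n : ℕ} (a : Fin n → ℂ) (j₀ : Fin n) :
    (2 : ℝ) ^ n * ‖a j₀‖ ≤ ∑ ε : Fin n → Bool, ‖∑ j : Fin n, sgnC (ε j) * a j‖ := by
  set f : (Fin n → Bool) → ℝ := fun ε => ‖∑ j : Fin n, sgnC (ε j) * a j‖ with hf
  set e : (Fin n → Bool) → (Fin n → Bool) :=
    fun ε => Function.update ε j₀ (!ε j₀) with he
  have hinv : Function.Involutive e := by
    intro ε; funext j
    by_cases hj : j = j₀
    · subst hj; simp [he]
    · simp [he, Function.update_of_ne hj]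
  have hsum : ∑ ε : Fin n → Bool, f (e ε) = ∑ ε : Fin n → Bool, f ε :=
    Equiv.sum_comp hinv.toPerm f
  have hdiff : ∀ ε : Fin n → Bool,
      (∑ j : Fin n, sgnC (ε j) * a j) - (∑ j : Fin n, sgnC (e ε j) * a j)
        = 2 * sgnC (ε j₀) * a j₀ := by
    intro ε
    rw [← Finset.sum_sub_distrib]
    rw [Finset.sum_eq_single j₀]
    · have : e ε j₀ = !ε j₀ := by simp [he]
      rw [this]
      cases h : ε j₀ <;> simp [sgnC] <;> ring
    · intro j _ hj
      have : e ε j = ε j := Function.update_of_ne hj _ _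
      rw [this, sub_self]
    · intro h; exact absurd (Finset.mem_univ j₀) h
  have hlow : ∀ ε : Fin n → Bool, 2 * ‖a j₀‖ ≤ f ε + f (e ε) := by
    intro ε
    calc 2 * ‖a j₀‖ = ‖2 * sgnC (ε j₀) * a j₀‖ := by
          rw [norm_mul, norm_mul, sgnC_norm]
          simp
      _ = ‖(∑ j : Fin n, sgnC (ε j) * a j) - (∑ j : Fin n, sgnC (e ε j) * a j)‖ := by
          rw [hdiff ε]
      _ ≤ f ε + f (e ε) := norm_sub_le _ _
  have hcard : (Fintype.card (Fin n → Bool) : ℝ) = 2 ^ n := by simp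
  have h2 : (2:ℝ) ^ n * (2 * ‖a j₀‖) ≤ ∑ ε : Fin n → Bool, (f ε + f (e ε)) := by
    calc (2:ℝ) ^ n * (2 * ‖a j₀‖)
        = ∑ _ε : Fin n → Bool, 2 * ‖a j₀‖ := by
          rw [Finset.sum_const, Finset.card_univ, nsmul_eq_mul, hcard]
      _ ≤ _ := Finset.sum_le_sum fun ε _ => hlow ε
  rw [Finset.sum_add_distrib, hsum] at h2
  linarith

/-- The `1`-summing norm of the identity `ℓ₁ⁿ → ℓ_∞ⁿ` equals `1` (for `n ≥ 1`):
`π₁(id) = sup { Σ_k ‖x_k‖_∞ : sup_{|t_k|=1} ‖Σ_k t_k x_k‖₁ ≤ 1 } = 1`. -/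
theorem oneSumming_id_l1_linfty (n : ℕ) (hn : 0 < n) :
    sSup { r : ℝ | ∃ (l : ℕ) (x : Fin l → (Fin n → ℂ)),
        (∀ t : Fin l → ℂ, (∀ k, ‖t k‖ = 1) →
          ∑ j : Fin n, ‖∑ k : Fin l, t k * x k j‖ ≤ 1) ∧
        r = ∑ k : Fin l, ⨆ j : Fin n, ‖x k j‖ } = 1 := by
  haveI : Nonempty (Fin n) := ⟨⟨0, hn⟩⟩
  set S := { r : ℝ | ∃ (l : ℕ) (x : Fin l → (Fin n → ℂ)),
        (∀ t : Fin l → ℂ, (∀ k, ‖t k‖ = 1) →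
          ∑ j : Fin n, ‖∑ k : Fin l, t k * x k j‖ ≤ 1) ∧
        r = ∑ k : Fin l, ⨆ j : Fin n, ‖x k j‖ } with hS
  -- every element of `S` is at most `1`
  have hub : ∀ r ∈ S, r ≤ 1 := by
    rintro r ⟨l, x, h, rfl⟩
    choose jk hjk using fun k : Fin l =>
      Finite.exists_max (fun j : Fin n => ‖x k j‖)
    have h1 : ∑ k : Fin l, ⨆ j : Fin n, ‖x k j‖ ≤ ∑ k : Fin l, ‖x k (jk k)‖ :=
      Finset.sum_le_sum fun k _ => ciSup_le fun j => hjk k j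
    have h2 : (2:ℝ) ^ n * ∑ k : Fin l, ‖x k (jk k)‖ ≤ (2:ℝ) ^ n * 1 := by
      calc (2:ℝ) ^ n * ∑ k : Fin l, ‖x k (jk k)‖
          = ∑ k : Fin l, (2:ℝ) ^ n * ‖x k (jk k)‖ := Finset.mul_sum _ _ _
        _ ≤ ∑ k : Fin l, ∑ ε : Fin n → Bool, ‖∑ j : Fin n, sgnC (ε j) * x k j‖ :=
            Finset.sum_le_sum fun k _ => avg_signs (x k) (jk k)
        _ = ∑ ε : Fin n → Bool, ∑ k : Fin l, ‖∑ j : Fin n, sgnC (ε j) * x k j‖ :=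
            Finset.sum_comm
        _ ≤ ∑ _ε : Fin n → Bool, (1:ℝ) :=
            Finset.sum_le_sum fun ε _ => pointwise_sum_le x h ε
        _ = (2:ℝ) ^ n * 1 := by simp
    have h3 : ∑ k : Fin l, ‖x k (jk k)‖ ≤ 1 := by
      have hp : (0:ℝ) < 2 ^ n := by positivity
      nlinarith
    exact h1.trans h3
  -- `1` belongs to `S` (take a single standard basis vector)
  have hmem : (1:ℝ) ∈ S := by
    refine ⟨1, fun _ j => if j = ⟨0, hn⟩ then 1 else 0, ?_, ?_⟩
    · intro t ht
      have : ∀ j : Fin n, ‖∑ k : Fin 1, t k * (if j = ⟨0, hn⟩ then (1:ℂ) else 0)‖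
          = if j = ⟨0, hn⟩ then (1:ℝ) else 0 := by
        intro j
        rw [Fin.sum_univ_one]
        by_cases hj : j = ⟨0, hn⟩ <;> simp [hj, ht 0]
      rw [Finset.sum_congr rfl fun j _ => this j]
      simp
    · rw [Fin.sum_univ_one]
      refine le_antisymm ?_ ?_
      · refine le_trans ?_ (le_ciSup (Finite.bddAbove_range _) (⟨0, hn⟩ : Fin n))
        simp
      · apply ciSup_le
        intro j
        by_cases hj : j = ⟨0, hn⟩ <;> simp [hj]
  exact le_antisymm (csSup_le ⟨1, hmem⟩ hub) (le_csSup ⟨1, hub⟩ hmem)
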